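/- For every a ∈ M₁, θ ∧_R a = 1 and θ ∨_R a = θa = aθ. -/

import Mathlib

namespace GarsideOrder

variable {G : Type*} [Group G]

/-- `a ≤_R b` iff `b * a⁻¹ ∈ M`. -/
def leR (M : Submonoid G) (a b : G) : Prop := b * a⁻¹ ∈ M

/-- `a ≤_L b` iff `a⁻¹ * b ∈ M`. -/
def leL (M : Submonoid G) (a b : G) : Prop := a⁻¹ * b ∈ M

/-- Right divisors (in `M`) of `a`. -/
def DivR (M : Submonoid G) (a : G) : Set G := {b : G | b ∈ M ∧ leR M b a}

/-- Left divisors (in `M`) of `a`. -/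
def DivL (M : Submonoid G) (a : G) : Set G := {b : G | b ∈ M ∧ leL M b a}

/-- `a` is balanced if its sets of right and left divisors coincide. -/
def Balanced (M : Submonoid G) (a : G) : Prop := DivR M a = DivL M a

open Classical in
/-- The `N`-tail of `a`: the unique `b ∈ N` having the same right divisors lying in `N`
as `a` (w.r.t. the divisibility of the ambient monoid `M`). -/
noncomputable def tail (M N : Submonoid G) (a : G) : G :=
  if h : ∃ b : G, b ∈ N ∧
      {c : G | c ∈ N ∧ leR M c a} = {c : G | c ∈ N ∧ leR M c b} then
    h.choose
  else 1

/-- Iterated stripping of alternating tails: first the `M₁`-tail, then the `N`-tail, etc. -/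
noncomputable def strip (M M₁ N : Submonoid G) : ℕ → G → G
  | 0, a => a
  | i + 1, a =>
      strip M M₁ N i a *
        (tail M (if i % 2 = 0 then M₁ else N) (strip M M₁ N i a))⁻¹

/-- The breadth of `a`: the length of the alternating form of `a`, i.e. the least `p ≥ 1`
such that stripping alternating tails `p` times reaches `1`. -/
noncomputable def bh (M M₁ N : Submonoid G) (a : G) : ℕ :=
  sInf {p : ℕ | 1 ≤ p ∧ strip M M₁ N p a = 1}

/-- The depth of `a`: `(bh a - 1)/2` if `bh a` is odd, `bh a / 2` if `bh a` is even;
in both cases this is `bh a / 2` with natural division. -/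
noncomputable def dpt (M M₁ N : Submonoid G) (a : G) : ℕ := bh M M₁ N a / 2

/-- `a ∈ M` is unmovable if `Δ` does not right-divide it. -/
def Unmovable (M : Submonoid G) (Δ a : G) : Prop := a ∈ M ∧ ¬ leR M Δ a

/-- `α` is `(H, G₁)`-negative: its `Δ`-form is `a Δ^{-k}` with `k ≥ 1` and
`dpt a < dpt (Δ^k)`. -/
def Negative (M M₁ N : Submonoid G) (Δ : G) (α : G) : Prop :=
  ∃ a : G, ∃ k : ℕ, Unmovable M Δ a ∧ 1 ≤ k ∧ α = a * (Δ ^ k)⁻¹ ∧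
    dpt M M₁ N a < dpt M M₁ N (Δ ^ k)

/-- `α` is `(H, G₁)`-positive if `α⁻¹` is `(H, G₁)`-negative. -/
def Positive (M M₁ N : Submonoid G) (Δ : G) (α : G) : Prop :=
  Negative M M₁ N Δ α⁻¹

/-- The set `Θ` of theta elements `θ^k a₀`, `k ≥ 1`, `a₀ ∈ M₁`. -/
def thetaSet (M₁ : Submonoid G) (θ : G) : Set G :=
  {x : G | ∃ k : ℕ, 1 ≤ k ∧ ∃ a₀ ∈ M₁, x = θ ^ k * a₀}

/-- `Θ̄ = Θ ∪ M₁`. -/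
def thetaBar (M₁ : Submonoid G) (θ : G) : Set G := thetaSet M₁ θ ∪ (M₁ : Set G)

/-- Condition A with constant `ζ`: `dpt (Δ^k) = ζ k + 1` for all `k ≥ 1`. -/
def CondA (M M₁ N : Submonoid G) (Δ : G) (ζ : ℕ) : Prop :=
  ∀ k : ℕ, 1 ≤ k → dpt M M₁ N (Δ ^ k) = ζ * k + 1

/-- Condition B with constant `ζ`. -/
def CondB (M M₁ N : Submonoid G) (Δ θ : G) (ζ : ℕ) : Prop :=
  ∀ a b c : G, ∀ t : ℤ,
    Unmovable M Δ a → Unmovable M Δ b →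
    ¬(a ∈ thetaBar M₁ θ ∧ b ∈ thetaBar M₁ θ) →
    Unmovable M Δ c → a * b = c * Δ ^ t →
    ∃ ε : ℕ, ε ≤ 1 ∧
      (dpt M M₁ N c : ℤ) =
        (dpt M M₁ N a : ℤ) + (dpt M M₁ N b : ℤ) - (ζ : ℤ) * t - (ε : ℤ) ∧
      ((a ∈ thetaSet M₁ θ ∨ b ∈ thetaSet M₁ θ ∨ c ∈ M₁) → ε = 1)

/-- A Garside structure with group of fractions the subgroup `car`. -/
structure IsGarsideOn (car : Subgroup G) (M : Submonoid G) (Δ : G) : Prop where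
  M_sub : (M : Set G) ⊆ (car : Set G)
  delta_mem : Δ ∈ M
  units_trivial : ∀ x : G, x ∈ M → x⁻¹ ∈ M → x = 1
  noetherian : ∀ a ∈ M, ∃ n : ℕ, 1 ≤ n ∧ ∀ l : List G,
      (∀ x ∈ l, x ∈ M ∧ x ≠ 1) → l.prod = a → l.length ≤ n
  balanced : Balanced M Δ
  div_finite : (DivR M Δ).Finite
  div_gen_monoid : Submonoid.closure (DivR M Δ) = M
  div_gen_group : Subgroup.closure (DivR M Δ) = car
  meet : ∀ a ∈ car, ∀ b ∈ car, ∃ c ∈ car, leR M c a ∧ leR M c b ∧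
      ∀ d ∈ car, leR M d a → leR M d b → leR M d c
  join : ∀ a ∈ car, ∀ b ∈ car, ∃ c ∈ car, leR M a c ∧ leR M b c ∧
      ∀ d ∈ car, leR M a d → leR M b d → leR M c d

/-- The parabolic submonoid determined by `δ`: the submonoid generated by `Div(δ)`. -/
def parM (M : Submonoid G) (δ : G) : Submonoid G := Submonoid.closure (DivR M δ)

/-- The parabolic subgroup determined by `δ`: the subgroup generated by `Div(δ)`. -/
def parG (M : Submonoid G) (δ : G) : Subgroup G := Subgroup.closure (DivR M δ)

/-- `δ` determines a parabolic substructure of `(G, M, Δ)`. -/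
structure IsParabolic (M : Submonoid G) (Δ δ : G) : Prop where
  mem : δ ∈ M
  balanced : Balanced M δ
  div_eq : DivR M δ = DivR M Δ ∩ (parM M δ : Set G)

/-- The setting of Section 3: a Garside structure `(car, M, Δ)` together with two
parabolic substructures `(H, N, Λ)` (given by `lam`) and `(G₁, M₁, Δ₁)` (given by `δ1`),
with `N ≠ M`, `M₁ ≠ M`, `N ∪ M₁` generating `M`, `Δ` central, `Δ₁` central in `G₁`. -/
structure Setting (G : Type*) [Group G] where
  car : Subgroup G
  M : Submonoid G
  Δ : G
  δ1 : G
  lam : G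
  garside : IsGarsideOn car M Δ
  par1 : IsParabolic M Δ δ1
  parH : IsParabolic M Δ lam
  N_ne : parM M lam ≠ M
  M1_ne : parM M δ1 ≠ M
  unionGen : Submonoid.closure ((parM M lam : Set G) ∪ (parM M δ1 : Set G)) = M
  delta_central : ∀ g ∈ car, Δ * g = g * Δ
  delta1_central : ∀ g ∈ parG M δ1, δ1 * g = g * δ1

namespace Setting

variable (S : Setting G)

/-- The parabolic submonoid `M₁`. -/
def M₁ : Submonoid G := parM S.M S.δ1

/-- The parabolic submonoid `N`. -/
def Nsub : Submonoid G := parM S.M S.lam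

/-- The parabolic subgroup `G₁`. -/
def G₁ : Subgroup G := parG S.M S.δ1

/-- `θ = Δ Δ₁⁻¹`. -/
def theta : G := S.Δ * S.δ1⁻¹

/-- The set of `(H, G₁)`-negative elements. -/
def Neg : Set G := {α : G | Negative S.M S.M₁ S.Nsub S.Δ α}

/-- The set of `(H, G₁)`-positive elements. -/
def Pos : Set G := {α : G | α⁻¹ ∈ S.Neg}

/-- Condition A. -/
def condA (ζ : ℕ) : Prop := CondA S.M S.M₁ S.Nsub S.Δ ζ

/-- Condition B. -/
def condB (ζ : ℕ) : Prop := CondB S.M S.M₁ S.Nsub S.Δ S.theta ζ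

/-- `(H, G₁)` is a Dehornoy structure: `PP ⊆ P`, `G₁ P G₁ ⊆ P`, and the group is the
disjoint union of `P`, `P⁻¹` and `G₁`. -/
def IsDehornoy : Prop :=
  (∀ α ∈ S.Pos, ∀ β ∈ S.Pos, α * β ∈ S.Pos) ∧
  (∀ g₁ ∈ S.G₁, ∀ α ∈ S.Pos, ∀ g₂ ∈ S.G₁, g₁ * α * g₂ ∈ S.Pos) ∧
  (∀ α ∈ S.car, α ∈ S.Pos ∨ α ∈ S.Neg ∨ α ∈ S.G₁) ∧
  (∀ α : G, ¬(α ∈ S.Pos ∧ α ∈ S.Neg)) ∧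
  (∀ α : G, ¬(α ∈ S.Pos ∧ α ∈ S.G₁)) ∧
  (∀ α : G, ¬(α ∈ S.Neg ∧ α ∈ S.G₁))

end Setting

end GarsideOrder


namespace GarsideOrder

namespace Setting

variable {G : Type*} [Group G] (S : Setting G)

lemma mem_car' (hcar : S.car = ⊤) (g : G) : g ∈ S.car := by rw [hcar]; trivial

lemma M1_subset_M : ∀ x ∈ S.M₁, x ∈ S.M :=
  fun _x hx => Submonoid.closure_le.mpr (fun _y hy => hy.1) hx

lemma M1_subset_G1 : ∀ x ∈ S.M₁, x ∈ S.G₁ :=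
  fun _x hx =>
    (Submonoid.closure_le (S := S.G₁.toSubmonoid)).mpr
      (fun _y hy => Subgroup.subset_closure hy) hx

lemma delta1_mem_div : S.δ1 ∈ DivR S.M S.δ1 :=
  ⟨S.par1.mem, by simp [leR, S.M.one_mem]⟩

lemma delta1_mem_M1 : S.δ1 ∈ S.M₁ := Submonoid.subset_closure S.delta1_mem_div

lemma theta_mem_M : S.theta ∈ S.M := by
  have h := S.delta1_mem_div
  rw [S.par1.div_eq] at h
  exact h.1.2

lemma theta_comm (hcar : S.car = ⊤) : ∀ x ∈ S.G₁, S.theta * x = x * S.theta := by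
  intro x hx
  have h1 : S.δ1 * x = x * S.δ1 := S.delta1_central x hx
  have h2 : S.Δ * x = x * S.Δ := S.delta_central x (S.mem_car' hcar x)
  have h1' : S.δ1⁻¹ * x = x * S.δ1⁻¹ := (Commute.inv_left h1).eq
  calc S.Δ * S.δ1⁻¹ * x = S.Δ * (S.δ1⁻¹ * x) := by group
    _ = S.Δ * (x * S.δ1⁻¹) := by rw [h1']
    _ = (S.Δ * x) * S.δ1⁻¹ := by group
    _ = x * (S.Δ * S.δ1⁻¹) := by rw [h2]; group

/-- The key inductive lemma: for every `a ∈ M₁`, `a ∈ M`, `θ` commutes with `a`,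
`θ ∧_R a = 1` (for divisors in `M`) and every common right-multiple of `θ` and `a`
is a right multiple of `θ a`. -/
lemma main_lemma (hcar : S.car = ⊤) : ∀ a ∈ S.M₁,
    a ∈ S.M ∧ S.theta * a = a * S.theta ∧
    (∀ b, b ∈ S.M → S.theta * b⁻¹ ∈ S.M → a * b⁻¹ ∈ S.M → b = 1) ∧
    (∀ v : G, v * S.theta⁻¹ ∈ S.M → v * a⁻¹ ∈ S.M → v * (S.theta * a)⁻¹ ∈ S.M) := by
  intro a ha
  induction ha using Submonoid.closure_induction with
  | one =>
    refine ⟨S.M.one_mem, by group, ?_, ?_⟩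
    · intro b hb hθ h1
      have hbinv : b⁻¹ ∈ S.M := by simpa using h1
      exact S.garside.units_trivial b hb hbinv
    · intro v hθ h1
      simpa using hθ
  | mem s hs =>
    have hsM : s ∈ S.M := hs.1
    have hsM1 : s ∈ S.M₁ := Submonoid.subset_closure hs
    have hsG1 : s ∈ S.G₁ := S.M1_subset_G1 s hsM1
    have hcomm : S.theta * s = s * S.theta := S.theta_comm hcar s hsG1
    refine ⟨hsM, hcomm, ?_, ?_⟩
    · -- gcd for a generator
      intro b hb hθ hsb
      have hδ1b : S.δ1 * b⁻¹ ∈ S.M := by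
        have : (S.δ1 * s⁻¹) * (s * b⁻¹) ∈ S.M := S.M.mul_mem hs.2 hsb
        simpa [mul_assoc] using this
      have hbM1 : b ∈ S.M₁ := Submonoid.subset_closure ⟨hb, hδ1b⟩
      have hbd : b * S.δ1 ∈ DivR S.M S.δ1 := by
        rw [S.par1.div_eq]
        refine ⟨⟨S.M.mul_mem hb S.par1.mem, ?_⟩, S.M₁.mul_mem hbM1 S.delta1_mem_M1⟩
        show S.Δ * (b * S.δ1)⁻¹ ∈ S.M
        have : S.Δ * (b * S.δ1)⁻¹ = S.theta * b⁻¹ := by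
          simp only [Setting.theta]; group
        rw [this]; exact hθ
      have hbinv : b⁻¹ ∈ S.M := by
        have h : S.δ1 * (b * S.δ1)⁻¹ ∈ S.M := hbd.2
        have : S.δ1 * (b * S.δ1)⁻¹ = b⁻¹ := by group
        rwa [this] at h
      exact S.garside.units_trivial b hb hbinv
    · -- lcm for a generator
      intro v hvθ hvs
      obtain ⟨c, _, hθc, hsc, hmin⟩ :=
        S.garside.join S.theta (S.mem_car' hcar _) s (S.mem_car' hcar _)
      -- θ * s is an upper bound of θ and s
      have hub1 : leR S.M S.theta (S.theta * s) := by
        show S.theta * s * S.theta⁻¹ ∈ S.M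
        rw [hcomm]
        simpa using hsM
      have hub2 : leR S.M s (S.theta * s) := by
        show S.theta * s * s⁻¹ ∈ S.M
        simpa using S.theta_mem_M
      have hr : S.theta * s * c⁻¹ ∈ S.M := hmin (S.theta * s) (S.mem_car' hcar _) hub1 hub2
      set r := S.theta * s * c⁻¹ with hrdef
      have hp : c * S.theta⁻¹ ∈ S.M := hθc
      have hq : c * s⁻¹ ∈ S.M := hsc
      -- r⁻¹ * s = c * θ⁻¹
      have hrs : r⁻¹ * s = c * S.theta⁻¹ := by
        rw [hrdef]
        have h1 : S.theta⁻¹ * s = s * S.theta⁻¹ := (Commute.inv_left hcomm).eq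
        calc (S.theta * s * c⁻¹)⁻¹ * s = c * (s⁻¹ * (S.theta⁻¹ * s)) := by group
          _ = c * (s⁻¹ * (s * S.theta⁻¹)) := by rw [h1]
          _ = c * S.theta⁻¹ := by group
      -- r⁻¹ * θ = c * s⁻¹
      have hrθ : r⁻¹ * S.theta = c * s⁻¹ := by
        rw [hrdef]
        have h1 : s⁻¹ * S.theta⁻¹ * S.theta = s⁻¹ := by group
        calc (S.theta * s * c⁻¹)⁻¹ * S.theta = c * (s⁻¹ * S.theta⁻¹ * S.theta) := by group
          _ = c * s⁻¹ := by rw [h1]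
      -- s⁻¹ δ1 ∈ M since δ1 is balanced
      have hsL : s ∈ DivL S.M S.δ1 := by rw [← S.par1.balanced]; exact hs
      have hrδ1 : r⁻¹ * S.δ1 ∈ S.M := by
        have : (r⁻¹ * s) * (s⁻¹ * S.δ1) ∈ S.M := by
          rw [hrs]; exact S.M.mul_mem hp hsL.2
        simpa [mul_assoc] using this
      have hrM : r ∈ S.M := hr
      have hrDiv : r ∈ DivR S.M S.δ1 := by
        rw [S.par1.balanced]; exact ⟨hrM, hrδ1⟩
      have hrM1 : r ∈ S.M₁ := Submonoid.subset_closure hrDiv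
      have hrG1 : r ∈ S.G₁ := S.M1_subset_G1 r hrM1
      have hrcomm : S.theta * r = r * S.theta := S.theta_comm hcar r hrG1
      -- r δ1 is a left divisor of Δ
      have hδ1c : S.δ1 * r = r * S.δ1 := S.delta1_central r hrG1
      have hΔc : S.Δ * r = r * S.Δ := S.delta_central r (S.mem_car' hcar r)
      have hkey : (r * S.δ1)⁻¹ * S.Δ = r⁻¹ * S.theta := by
        have h2 : r⁻¹ * S.Δ = S.Δ * r⁻¹ := (Commute.inv_right hΔc).eq.symm
        calc (r * S.δ1)⁻¹ * S.Δ = S.δ1⁻¹ * (r⁻¹ * S.Δ) := by group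
          _ = S.δ1⁻¹ * (S.Δ * r⁻¹) := by rw [h2]
          _ = S.δ1⁻¹ * S.Δ * r⁻¹ := by group
          _ = S.Δ * S.δ1⁻¹ * r⁻¹ := by
              have h3 : S.Δ * S.δ1 = S.δ1 * S.Δ := S.delta_central S.δ1 (S.mem_car' hcar _)
              have h4 : S.δ1⁻¹ * S.Δ = S.Δ * S.δ1⁻¹ := (Commute.inv_left h3.symm).eq
              rw [h4]
          _ = r⁻¹ * (S.Δ * S.δ1⁻¹) := by
              have h5 : (S.Δ * S.δ1⁻¹) * r = r * (S.Δ * S.δ1⁻¹) := hrcomm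
              have h6 := (Commute.inv_right h5).eq
              -- h6 : (Δ δ1⁻¹) * r⁻¹ = r⁻¹ * (Δ δ1⁻¹)
              exact h6
          _ = r⁻¹ * S.theta := rfl
      have hrδ1Div : r * S.δ1 ∈ DivR S.M S.Δ := by
        rw [S.garside.balanced]
        refine ⟨S.M.mul_mem hrM S.par1.mem, ?_⟩
        show (r * S.δ1)⁻¹ * S.Δ ∈ S.M
        rw [hkey, hrθ]
        exact hq
      have hrδ1div1 : r * S.δ1 ∈ DivR S.M S.δ1 := by
        rw [S.par1.div_eq]
        exact ⟨hrδ1Div, S.M₁.mul_mem hrM1 S.delta1_mem_M1⟩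
      have hrinv : r⁻¹ ∈ S.M := by
        have h : S.δ1 * (r * S.δ1)⁻¹ ∈ S.M := hrδ1div1.2
        have : S.δ1 * (r * S.δ1)⁻¹ = r⁻¹ := by group
        rwa [this] at h
      have hr1 : r = 1 := S.garside.units_trivial r hrM hrinv
      -- hence c = θ * s
      have hc : c = S.theta * s := by
        have : S.theta * s * c⁻¹ = 1 := hr1
        have h := congrArg (· * c) this
        simpa [mul_assoc] using h.symm
      -- v is an upper bound of θ and s, so c ≤ v
      have := hmin v (S.mem_car' hcar v) hvθ hvs
      rwa [hc] at this
  | mul a₁ a₂ ha₁ ha₂ ih₁ ih₂ =>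
    obtain ⟨h1M, h1c, h1gcd, h1lcm⟩ := ih₁
    obtain ⟨h2M, h2c, h2gcd, h2lcm⟩ := ih₂
    have hmem : a₁ * a₂ ∈ S.M := S.M.mul_mem h1M h2M
    have hcomm : S.theta * (a₁ * a₂) = (a₁ * a₂) * S.theta := by
      calc S.theta * (a₁ * a₂) = (S.theta * a₁) * a₂ := by group
        _ = a₁ * (S.theta * a₂) := by rw [h1c]; group
        _ = a₁ * (a₂ * S.theta) := by rw [h2c]
        _ = (a₁ * a₂) * S.theta := by group
    refine ⟨hmem, hcomm, ?_, ?_⟩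
    · -- gcd step
      intro b hb hθb hab
      obtain ⟨c, _, hbc, ha₂c, hmin⟩ :=
        S.garside.join b (S.mem_car' hcar _) a₂ (S.mem_car' hcar _)
      -- θ a₂ is an upper bound of b and a₂
      have hub1 : leR S.M b (S.theta * a₂) := by
        show S.theta * a₂ * b⁻¹ ∈ S.M
        have : a₂ * (S.theta * b⁻¹) ∈ S.M := S.M.mul_mem h2M hθb
        rw [h2c]
        simpa [mul_assoc] using this
      have hub2 : leR S.M a₂ (S.theta * a₂) := by
        show S.theta * a₂ * a₂⁻¹ ∈ S.M
        simpa using S.theta_mem_M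
      have hcθa₂ : S.theta * a₂ * c⁻¹ ∈ S.M :=
        hmin (S.theta * a₂) (S.mem_car' hcar _) hub1 hub2
      -- a₁ a₂ is an upper bound of b and a₂
      have hub3 : leR S.M b (a₁ * a₂) := hab
      have hub4 : leR S.M a₂ (a₁ * a₂) := by
        show a₁ * a₂ * a₂⁻¹ ∈ S.M
        simpa using h1M
      have hca : a₁ * a₂ * c⁻¹ ∈ S.M := hmin (a₁ * a₂) (S.mem_car' hcar _) hub3 hub4
      -- e := c * a₂⁻¹ divides θ and a₁
      have heM : c * a₂⁻¹ ∈ S.M := ha₂c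
      have heθ : S.theta * (c * a₂⁻¹)⁻¹ ∈ S.M := by
        have h : S.theta * (c * a₂⁻¹)⁻¹ = S.theta * a₂ * c⁻¹ := by group
        rw [h]; exact hcθa₂
      have hea₁ : a₁ * (c * a₂⁻¹)⁻¹ ∈ S.M := by
        have h : a₁ * (c * a₂⁻¹)⁻¹ = a₁ * a₂ * c⁻¹ := by group
        rw [h]; exact hca
      have he1 : c * a₂⁻¹ = 1 := h1gcd (c * a₂⁻¹) heM heθ hea₁
      have hc : c = a₂ := by
        have h := congrArg (· * a₂) he1
        simpa [mul_assoc] using h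
      have ha₂b : a₂ * b⁻¹ ∈ S.M := by rw [← hc]; exact hbc
      exact h2gcd b hb hθb ha₂b
    · -- lcm step
      intro v hvθ hva
      have hva₂ : v * a₂⁻¹ ∈ S.M := by
        have : (v * (a₁ * a₂)⁻¹) * a₁ ∈ S.M := S.M.mul_mem hva h1M
        have h : (v * (a₁ * a₂)⁻¹) * a₁ = v * a₂⁻¹ := by group
        rwa [h] at this
      have h2 : v * (S.theta * a₂)⁻¹ ∈ S.M := h2lcm v hvθ hva₂
      have hv'θ : (v * a₂⁻¹) * S.theta⁻¹ ∈ S.M := by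
        have h : (v * a₂⁻¹) * S.theta⁻¹ = v * (S.theta * a₂)⁻¹ := by group
        rw [h]; exact h2
      have hv'a₁ : (v * a₂⁻¹) * a₁⁻¹ ∈ S.M := by
        have h : (v * a₂⁻¹) * a₁⁻¹ = v * (a₁ * a₂)⁻¹ := by group
        rw [h]; exact hva
      have h1 : (v * a₂⁻¹) * (S.theta * a₁)⁻¹ ∈ S.M := h1lcm (v * a₂⁻¹) hv'θ hv'a₁
      have h : (v * a₂⁻¹) * (S.theta * a₁)⁻¹ = v * (S.theta * (a₁ * a₂))⁻¹ := by group
      rwa [h] at h1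

end Setting

end GarsideOrder

open GarsideOrder in
/-- For every `a ∈ M₁`, `θ ∧_R a = 1` and `θ ∨_R a = θ a = a θ`. -/
theorem statement2 {G : Type*} [Group G] (S : Setting G) (hcar : S.car = ⊤) :
    ∀ a ∈ S.M₁,
      leR S.M 1 S.theta ∧ leR S.M 1 a ∧
      (∀ u : G, leR S.M u S.theta → leR S.M u a → leR S.M u 1) ∧
      S.theta * a = a * S.theta ∧
      leR S.M S.theta (S.theta * a) ∧ leR S.M a (S.theta * a) ∧
      (∀ v : G, leR S.M S.theta v → leR S.M a v → leR S.M (S.theta * a) v) := by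
  intro a ha
  obtain ⟨haM, hacomm, hgcd, hlcm⟩ := S.main_lemma hcar a ha
  refine ⟨?_, ?_, ?_, hacomm, ?_, ?_, ?_⟩
  · show S.theta * (1 : G)⁻¹ ∈ S.M
    simpa using S.theta_mem_M
  · show a * (1 : G)⁻¹ ∈ S.M
    simpa using haM
  · intro u huθ hua
    obtain ⟨c, _, huc, h1c, hmin⟩ :=
      S.garside.join u (S.mem_car' hcar _) (1 : G) (S.mem_car' hcar _)
    have hcM : c ∈ S.M := by simpa [leR] using h1c
    have hθub : leR S.M (1 : G) S.theta := by
      show S.theta * (1 : G)⁻¹ ∈ S.M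
      simpa using S.theta_mem_M
    have haub : leR S.M (1 : G) a := by
      show a * (1 : G)⁻¹ ∈ S.M
      simpa using haM
    have hcθ : S.theta * c⁻¹ ∈ S.M := hmin S.theta (S.mem_car' hcar _) huθ hθub
    have hca : a * c⁻¹ ∈ S.M := hmin a (S.mem_car' hcar _) hua haub
    have hc1 : c = 1 := hgcd c hcM hcθ hca
    show (1 : G) * u⁻¹ ∈ S.M
    rw [← hc1]
    simpa [leR] using huc
  · show S.theta * a * S.theta⁻¹ ∈ S.M
    rw [hacomm]
    simpa using haM
  · show S.theta * a * a⁻¹ ∈ S.M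
    simpa using S.theta_mem_M
  · intro v hθv hav
    exact hlcm v hθv hav
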